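/- If a flow of isometries of a torus ℂ/Γ is conjugate (by a conformal map) to the translation flow z ↦ z + it, and the flow has no periodic points, then every orbit is dense; consequently the Gaussian curvature K, being continuous and constant along each orbit (since each time-t map is an isometry), is constant on the torus, so the torus is flat. -/
import Mathlib


open Complex Pointwise

/-- a flow of isometries of a torus `ℂ/Γ` conjugate (by a homeomorphism,
in the paper a conformal map) to the translation flow `z ↦ z + it` and having no
periodic points has every orbit dense; consequently the Gaussian curvature `K`,
continuous and invariant along the flow (each time-`t` map being an isometry), is
constant, so the torus is flat. -/
theorem aperiodic_translation_flow_dense_orbits_and_constant_curvature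
    (π₁ π₂ : ℂ) (hlat : 0 < (π₁ / π₂).im)
    (Γ : AddSubgroup ℂ) (hΓ : Γ = AddSubgroup.closure {π₁, π₂})
    {M : Type*} [TopologicalSpace M]
    (e : M ≃ₜ (ℂ ⧸ Γ))
    (φ : ℝ → M → M)
    (hconj : ∀ (t : ℝ) (x : M),
      e (φ t x) = e x + QuotientAddGroup.mk ((t : ℂ) * Complex.I))
    (haper : ∀ (x : M) (t : ℝ), t ≠ 0 → φ t x ≠ x)
    (K : M → ℝ) (hKcont : Continuous K)
    (hKinv : ∀ (t : ℝ) (x : M), K (φ t x) = K x) :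
    (∀ x : M, Dense (Set.range fun t : ℝ => φ t x)) ∧ ∀ x y : M, K x = K y := by
  have hπ₂ : π₂ ≠ 0 := by
    rintro rfl
    simp at hlat
  -- Aperiodicity means no nonzero vertical lattice vector.
  have hI : ∀ t : ℝ, t ≠ 0 → (t : ℂ) * Complex.I ∉ Γ := by
    intro t ht hmem
    refine haper (e.symm 0) t ht (e.injective ?_)
    rw [hconj, (QuotientAddGroup.eq_zero_iff _).2 hmem, add_zero]
  have h1 : π₁ ∈ Γ := by rw [hΓ]; exact AddSubgroup.subset_closure (by simp)
  have h2 : π₂ ∈ Γ := by rw [hΓ]; exact AddSubgroup.subset_closure (by simp)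
  -- The projection of Γ to the real axis is dense in ℝ.
  have hre : Dense ((Γ.map Complex.reAddGroupHom : AddSubgroup ℝ) : Set ℝ) := by
    rcases AddSubgroup.dense_or_cyclic (Γ.map Complex.reAddGroupHom) with h | ⟨r, hr⟩
    · exact h
    · exfalso
      obtain ⟨m, hm⟩ : ∃ m : ℤ, m • r = π₁.re := by
        have : π₁.re ∈ Γ.map Complex.reAddGroupHom := ⟨π₁, h1, rfl⟩
        rwa [hr, AddSubgroup.mem_closure_singleton] at this
      obtain ⟨n, hn⟩ : ∃ n : ℤ, n • r = π₂.re := by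
        have : π₂.re ∈ Γ.map Complex.reAddGroupHom := ⟨π₂, h2, rfl⟩
        rwa [hr, AddSubgroup.mem_closure_singleton] at this
      set γ : ℂ := (n : ℂ) * π₁ - (m : ℂ) * π₂ with hγdef
      have hγΓ : γ ∈ Γ := by
        have := sub_mem (zsmul_mem h1 n) (zsmul_mem h2 m)
        simpa [zsmul_eq_mul] using this
      have hre0 : γ.re = 0 := by
        have hm' : (m : ℝ) * r = π₁.re := by simpa [zsmul_eq_mul] using hm
        have hn' : (n : ℝ) * r = π₂.re := by simpa [zsmul_eq_mul] using hn
        simp only [hγdef, Complex.sub_re, Complex.mul_re, Complex.intCast_re,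
          Complex.intCast_im]
        rw [← hm', ← hn']
        ring
      by_cases him : γ.im = 0
      · -- γ = 0 : rational linear dependence, contradicting Im(π₁/π₂) > 0
        have hγ0 : (n : ℂ) * π₁ = (m : ℂ) * π₂ := by
          have hz : γ = 0 := Complex.ext hre0 him
          rw [hγdef] at hz
          exact sub_eq_zero.mp hz
        rcases eq_or_ne n 0 with hn0 | hn0
        · rcases eq_or_ne m 0 with hm0 | hm0
          · have hre1 : π₁.re = 0 := by rw [← hm, hm0]; simp
            have hre2 : π₂.re = 0 := by rw [← hn, hn0]; simp
            have : (π₁ / π₂).im = 0 := by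
              simp [Complex.div_im, hre1, hre2]
            linarith
          · apply hπ₂
            have hz : (m : ℂ) * π₂ = 0 := by rw [← hγ0, hn0]; simp
            have hmC : (m : ℂ) ≠ 0 := Int.cast_ne_zero.mpr hm0
            exact (mul_eq_zero.mp hz).resolve_left hmC
        · have hnC : (n : ℂ) ≠ 0 := Int.cast_ne_zero.mpr hn0
          have hdiv : π₁ / π₂ = (m : ℂ) / (n : ℂ) := by
            field_simp
            linear_combination hγ0
          have him0 : ((m : ℂ) / (n : ℂ)).im = 0 := by
            simp [Complex.div_im]
          rw [hdiv, him0] at hlat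
          exact lt_irrefl 0 hlat
      · exact hI γ.im him (by
          have hz : γ = (γ.im : ℂ) * Complex.I := Complex.ext (by simp [hre0]) (by simp)
          rwa [← hz])
  -- density of (vertical line) + Γ in ℂ
  have hdense : Dense ((Set.range fun t : ℝ => (t : ℂ) * Complex.I) + (Γ : Set ℂ)) := by
    rw [Metric.dense_iff]
    intro z ε hε
    obtain ⟨a, ha⟩ := (Metric.dense_iff.mp hre) z.re ε hε
    obtain ⟨γ, hγΓ, hγre⟩ := ha.2
    refine ⟨((z.im - γ.im : ℝ) : ℂ) * Complex.I + γ, ?_, ?_⟩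
    · rw [Metric.mem_ball]
      have himq : (((z.im - γ.im : ℝ) : ℂ) * Complex.I + γ).im = z.im := by simp
      have hwre : (((z.im - γ.im : ℝ) : ℂ) * Complex.I + γ).re = a := by
        simp only [Complex.add_re, Complex.mul_re, Complex.I_re, Complex.ofReal_re,
          Complex.I_im, Complex.ofReal_im]
        simpa using hγre
      rw [Complex.dist_of_im_eq himq, hwre]
      exact Metric.mem_ball.mp ha.1
    · exact Set.add_mem_add ⟨z.im - γ.im, rfl⟩ hγΓ
  -- density of the vertical line in the quotient torus
  have hQ : Dense (Set.range fun t : ℝ =>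
      (QuotientAddGroup.mk ((t : ℂ) * Complex.I) : ℂ ⧸ Γ)) := by
    have himg := (QuotientAddGroup.dense_image_mk
      (N := Γ) (s := Set.range fun t : ℝ => (t : ℂ) * Complex.I)).mpr hdense
    have : (QuotientAddGroup.mk '' (Set.range fun t : ℝ => (t : ℂ) * Complex.I)
        : Set (ℂ ⧸ Γ)) = Set.range fun t : ℝ =>
        (QuotientAddGroup.mk ((t : ℂ) * Complex.I) : ℂ ⧸ Γ) := by
      ext q
      simp [Set.mem_image, Set.mem_range]
    rwa [this] at himg
  -- every orbit is dense
  have hx : ∀ x : M, Dense (Set.range fun t : ℝ => φ t x) := by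
    intro x
    have h1 : Dense (⇑(Homeomorph.addLeft (e x)) ''
        (Set.range fun t : ℝ =>
          (QuotientAddGroup.mk ((t : ℂ) * Complex.I) : ℂ ⧸ Γ))) := by
      have hh := hQ.preimage (Homeomorph.addLeft (e x)).symm.isOpenMap
      rwa [Homeomorph.preimage_symm] at hh
    have h2 : (Set.range fun t : ℝ => φ t x) = e ⁻¹'
        (⇑(Homeomorph.addLeft (e x)) ''
          (Set.range fun t : ℝ =>
            (QuotientAddGroup.mk ((t : ℂ) * Complex.I) : ℂ ⧸ Γ))) := by
      ext y
      simp only [Set.mem_preimage, Set.mem_image, Set.mem_range,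
        Homeomorph.coe_addLeft]
      constructor
      · rintro ⟨t, rfl⟩
        exact ⟨_, ⟨t, rfl⟩, (hconj t x).symm⟩
      · rintro ⟨q, ⟨t, rfl⟩, hq⟩
        exact ⟨t, e.injective (by rw [hconj, hq])⟩
    rw [h2]
    exact h1.preimage e.isOpenMap
  refine ⟨hx, fun x y => ?_⟩
  have hsub : Set.range (fun t : ℝ => φ t x) ⊆ {z : M | K z = K x} := by
    rintro _ ⟨t, rfl⟩
    exact hKinv t x
  have hcl : IsClosed {z : M | K z = K x} := isClosed_eq hKcont continuous_const
  have hy : y ∈ {z : M | K z = K x} := by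
    have hcm := closure_mono hsub
    rw [(hx x).closure_eq, hcl.closure_eq] at hcm
    exact hcm (Set.mem_univ y)
  exact hy.symm
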